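/- arXiv:1004.2603 — 3 statements merged into one kernel-verified Lean document; each statement's English description precedes it below -/
import Mathlib

section
/- Let k be a field and let α, ε, η ∈ k* with ord(ε) = e, ord(η) = h (finite orders), and suppose α^e ∈ ⟨η⟩. Let A = diag(αε, α) and C = ηE₂ (scalar matrix) in GL(2,k). Then the subgroup K = ⟨A, C⟩ of GL(2,k) has order exactly eh. -/
open Matrix
set_option maxHeartbeats 1000000

/-- Let `k` be a field, `α ε η ∈ kˣ` with `ord ε = e`, `ord η = h` (finite,
i.e. positive, orders) and `α^e ∈ ⟨η⟩`.  For `A = diag(αε, α)` and `C = η·E₂` in `GL(2,k)`,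
the subgroup `K = ⟨A, C⟩` has order exactly `e·h`. -/
theorem order_of_subgroup_generated_by_diag_and_scalar
    {k : Type*} [Field k] (α ε η : kˣ) (e h : ℕ)
    (he : orderOf ε = e) (hh : orderOf η = h) (he0 : 0 < e) (hh0 : 0 < h)
    (hα : α ^ e ∈ Subgroup.zpowers η)
    (A C : GL (Fin 2) k)
    (hA : (A : Matrix (Fin 2) (Fin 2) k) = Matrix.diagonal ![((α * ε : kˣ) : k), (α : k)])
    (hC : (C : Matrix (Fin 2) (Fin 2) k) = (η : k) • (1 : Matrix (Fin 2) (Fin 2) k)) :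
    Nat.card (Subgroup.closure {A, C} : Subgroup (GL (Fin 2) k)) = e * h := by
  obtain ⟨s, hs⟩ := hα
  -- the scalar monoid hom
  set φ : kˣ →* GL (Fin 2) k := Units.map (Matrix.scalar (Fin 2)).toMonoidHom with hφ
  have hφval : ∀ u : kˣ, ((φ u : GL (Fin 2) k) : Matrix (Fin 2) (Fin 2) k) = (u : k) • 1 := by
    intro u
    simp [hφ, Matrix.scalar_apply, Matrix.smul_one_eq_diagonal]
  have hCφ : C = φ η := by
    apply Units.ext
    rw [hC, hφval]
  -- powers of A
  have hApow : ∀ i : ℕ, ((A ^ i : GL (Fin 2) k) : Matrix (Fin 2) (Fin 2) k)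
      = Matrix.diagonal ![(((α * ε) ^ i : kˣ) : k), ((α ^ i : kˣ) : k)] := by
    intro i
    rw [Units.val_pow_eq_pow_val, hA, Matrix.diagonal_pow]
    have hv : (![((α * ε : kˣ) : k), (α : k)]) ^ i = ![(((α * ε) ^ i : kˣ) : k), ((α ^ i : kˣ) : k)] := by
      funext x
      fin_cases x <;> simp
    rw [hv]
  have hAe : A ^ e = φ (α ^ e) := by
    apply Units.ext
    rw [hApow, hφval]
    have hεe : (ε : kˣ) ^ e = 1 := by rw [← he]; exact pow_orderOf_eq_one ε
    rw [Matrix.smul_one_eq_diagonal]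
    apply congrArg
    funext x
    fin_cases x <;> simp [mul_pow, hεe]
  have hs' : η ^ s = α ^ e := hs
  have hAeC : A ^ e = C ^ s := by
    rw [hAe, hCφ, ← map_zpow, hs']
  have hACcomm : Commute A C := by
    apply Units.ext
    simp only [Units.val_mul, hA, hC, mul_smul_comm, smul_mul_assoc, mul_one, one_mul]
  have hCh : C ^ h = 1 := by
    rw [hCφ, ← map_pow, ← hh, pow_orderOf_eq_one, _root_.map_one]
  -- membership characterization
  have hmem : ∀ x : GL (Fin 2) k, x ∈ Subgroup.closure {A, C} ↔ ∃ n m : ℤ, x = A ^ n * C ^ m := by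
    intro x
    constructor
    · intro hx
      induction hx using Subgroup.closure_induction with
      | mem y hy =>
        rw [Set.mem_insert_iff, Set.mem_singleton_iff] at hy
        rcases hy with rfl | rfl
        · exact ⟨1, 0, by simp⟩
        · exact ⟨0, 1, by simp⟩
      | one => exact ⟨0, 0, by simp⟩
      | mul a b ha hb iha ihb =>
        obtain ⟨n, m, rfl⟩ := iha
        obtain ⟨n', m', rfl⟩ := ihb
        refine ⟨n + n', m + m', ?_⟩
        rw [_root_.zpow_add, _root_.zpow_add]
        exact (hACcomm.symm.zpow_zpow m n').mul_mul_mul_comm (A ^ n) (C ^ m')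
      | inv a ha iha =>
        obtain ⟨n, m, rfl⟩ := iha
        refine ⟨-n, -m, ?_⟩
        rw [_root_.mul_inv_rev, ← _root_.zpow_neg, ← _root_.zpow_neg]
        exact (hACcomm.symm.zpow_zpow (-m) (-n)).eq
    · rintro ⟨n, m, rfl⟩
      exact mul_mem (zpow_mem (Subgroup.subset_closure (by simp)) n)
        (zpow_mem (Subgroup.subset_closure (by simp)) m)
  -- value of A^i * C^j
  have hval : ∀ i j : ℕ, ((A ^ i * C ^ j : GL (Fin 2) k) : Matrix (Fin 2) (Fin 2) k)
      = Matrix.diagonal ![(((α * ε) ^ i * η ^ j : kˣ) : k), ((α ^ i * η ^ j : kˣ) : k)] := by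
    intro i j
    have hCj : ((C ^ j : GL (Fin 2) k) : Matrix (Fin 2) (Fin 2) k) = ((η ^ j : kˣ) : k) • 1 := by
      rw [hCφ, ← map_pow, hφval]
    rw [Units.val_mul, hApow, hCj, Matrix.mul_smul, Matrix.mul_one, ← Matrix.diagonal_smul]
    apply congrArg
    funext x
    fin_cases x <;> simp [mul_comm]
  set K := Subgroup.closure ({A, C} : Set (GL (Fin 2) k)) with hK
  let f : Fin e × Fin h → K := fun p =>
    ⟨A ^ (p.1 : ℕ) * C ^ (p.2 : ℕ),
      mul_mem (pow_mem (Subgroup.subset_closure (by simp)) _)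
        (pow_mem (Subgroup.subset_closure (by simp)) _)⟩
  have hinj : Function.Injective f := by
    rintro ⟨⟨i, hi⟩, ⟨j, hj⟩⟩ ⟨⟨i', hi'⟩, ⟨j', hj'⟩⟩ hp
    have hv := congrArg (fun x : K => ((x : GL (Fin 2) k) : Matrix (Fin 2) (Fin 2) k)) hp
    simp only [f, hval] at hv
    have h0 : ((α * ε) ^ i * η ^ j : kˣ) = ((α * ε) ^ i' * η ^ j' : kˣ) := by
      apply Units.ext
      simpa using congrFun (congrFun hv 0) 0
    have h1 : (α ^ i * η ^ j : kˣ) = (α ^ i' * η ^ j' : kˣ) := by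
      apply Units.ext
      simpa using congrFun (congrFun hv 1) 1
    have hε : ε ^ i = ε ^ i' := by
      have h2 : (α ^ i * η ^ j) * ε ^ i = (α ^ i' * η ^ j') * ε ^ i' := by
        rw [mul_pow, mul_pow] at h0
        calc (α ^ i * η ^ j) * ε ^ i = α ^ i * ε ^ i * η ^ j := by
              rw [mul_right_comm]
          _ = α ^ i' * ε ^ i' * η ^ j' := h0
          _ = (α ^ i' * η ^ j') * ε ^ i' := by rw [mul_right_comm]
      rw [h1] at h2
      exact mul_left_cancel h2
    have hii : i = i' := by
      have := pow_eq_pow_iff_modEq.mp hε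
      rw [he] at this
      unfold Nat.ModEq at this
      rw [Nat.mod_eq_of_lt hi, Nat.mod_eq_of_lt hi'] at this
      exact this
    subst hii
    have hη : η ^ j = η ^ j' := mul_left_cancel h1
    have hjj : j = j' := by
      have := pow_eq_pow_iff_modEq.mp hη
      rw [hh] at this
      unfold Nat.ModEq at this
      rw [Nat.mod_eq_of_lt hj, Nat.mod_eq_of_lt hj'] at this
      exact this
    subst hjj
    rfl
  have hCzh : C ^ (h : ℤ) = 1 := by rw [zpow_natCast, hCh]
  have hsurj : Function.Surjective f := by
    rintro ⟨x, hx⟩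
    obtain ⟨n, m, rfl⟩ := (hmem x).1 hx
    have he' : (e : ℤ) ≠ 0 := by exact_mod_cast he0.ne'
    have hh' : (h : ℤ) ≠ 0 := by exact_mod_cast hh0.ne'
    set q : ℤ := n / e with hq
    set r : ℤ := n % e with hr
    set t : ℤ := s * q + m with ht
    have hr0 : 0 ≤ r := Int.emod_nonneg n he'
    have hrlt : r < e := Int.emod_lt_of_pos n (by exact_mod_cast he0)
    have ht0 : 0 ≤ t % h := Int.emod_nonneg t hh'
    have htlt : t % h < h := Int.emod_lt_of_pos t (by exact_mod_cast hh0)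
    refine ⟨(⟨r.toNat, ?_⟩, ⟨(t % h).toNat, ?_⟩), ?_⟩
    · omega
    · omega
    · apply Subtype.ext
      show A ^ (r.toNat) * C ^ ((t % h).toNat) = A ^ n * C ^ m
      have hAn : A ^ n = C ^ (s * q) * A ^ r := by
        conv_lhs => rw [← Int.mul_ediv_add_emod n e]
        rw [_root_.zpow_add, _root_.zpow_mul, zpow_natCast, hAeC, ← _root_.zpow_mul]
      have hAr : A ^ r = A ^ (r.toNat) := by
        rw [← zpow_natCast, Int.toNat_of_nonneg hr0]
      have hCt : C ^ t = C ^ ((t % h).toNat) := by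
        conv_lhs => rw [← Int.mul_ediv_add_emod t h]
        rw [_root_.zpow_add, _root_.zpow_mul, hCzh, _root_.one_zpow, one_mul, ← zpow_natCast,
          Int.toNat_of_nonneg ht0]
      calc A ^ (r.toNat) * C ^ ((t % h).toNat) = A ^ r * C ^ t := by rw [hAr, hCt]
        _ = A ^ r * (C ^ (s * q) * C ^ m) := by rw [ht, _root_.zpow_add]
        _ = A ^ r * C ^ (s * q) * C ^ m := by rw [mul_assoc]
        _ = C ^ (s * q) * A ^ r * C ^ m := by
              rw [(hACcomm.zpow_zpow r (s * q)).eq]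
        _ = A ^ n * C ^ m := by rw [← hAn]
  have hcard : Nat.card K = Nat.card (Fin e × Fin h) :=
    (Nat.card_congr (Equiv.ofBijective f ⟨hinj, hsurj⟩)).symm
  rw [hcard]
  simp
end

section
/- Every cyclic subgroup of order n ≥ 3 in PGL(3,k), over an algebraically closed field k of characteristic 0, is conjugate to the group generated by the class of diag(1,1,ε), or to the group generated by the class of diag(1,ε^i,ε^j) for some 1 ≤ i < j ≤ n−1 with gcd(i,j,n) = 1, where ε is a primitive n-th root of unity. -/
open Matrix

/-- The projective general linear group `PGL(n,k) = GL(n,k)` modulo its center (the scalar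
matrices, for `k` a field). -/
abbrev PGL (n : ℕ) (k : Type*) [Field k] :=
  GL (Fin n) k ⧸ Subgroup.center (GL (Fin n) k)

section Aux

variable {k : Type*} [Field k]

/-- A nonzero scalar matrix as an element of `GL(3,k)`. -/
noncomputable def scalarGL (c : k) (hc : c ≠ 0) : GL (Fin 3) k :=
  ⟨c • 1, c⁻¹ • 1, by rw [smul_mul_smul_comm, mul_one, mul_inv_cancel₀ hc, one_smul],
    by rw [smul_mul_smul_comm, mul_one, inv_mul_cancel₀ hc, one_smul]⟩

lemma scalarGL_mem_center (c : k) (hc : c ≠ 0) :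
    scalarGL c hc ∈ Subgroup.center (GL (Fin 3) k) := by
  rw [Subgroup.mem_center_iff]
  intro B
  ext : 1
  show (B.val) * (c • 1) = (c • 1) * B.val
  rw [Matrix.mul_smul, Matrix.smul_mul, mul_one, one_mul]

lemma center_is_scalar {A : GL (Fin 3) k} (hA : A ∈ Subgroup.center (GL (Fin 3) k)) :
    ∃ c : k, c ≠ 0 ∧ (A : Matrix (Fin 3) (Fin 3) k) = c • 1 := by
  rw [Subgroup.mem_center_iff] at hA
  have hcomm : Pairwise fun i j : Fin 3 =>
      Commute (single i j 1) (A : Matrix (Fin 3) (Fin 3) k) := by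
    intro i j hij
    have hT : ∀ c : k, (transvection i j c) * (A : Matrix (Fin 3) (Fin 3) k)
        = (A : Matrix (Fin 3) (Fin 3) k) * (transvection i j c) := by
      intro c
      let Tu : GL (Fin 3) k := ⟨transvection i j c, transvection i j (-c), by
          simp [Matrix.transvection_mul_transvection_same i j hij], by
          simp [Matrix.transvection_mul_transvection_same i j hij]⟩
      have h := congrArg Units.val (hA Tu)
      simpa using h
    have h1 := hT 1
    simp only [transvection, add_mul, mul_add, one_mul, mul_one] at h1
    exact add_left_cancel h1
  obtain ⟨r, hr⟩ := mem_range_scalar_of_commute_single hcomm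
  refine ⟨r, ?_, ?_⟩
  · rintro rfl
    have h1 : (A : Matrix (Fin 3) (Fin 3) k) * (A⁻¹ : GL (Fin 3) k) = 1 := A.mul_inv
    rw [← hr] at h1
    simp at h1
  · rw [← hr]
    ext i j
    simp [Matrix.scalar_apply, Matrix.smul_apply, Matrix.one_apply, Matrix.diagonal_apply]

/-- A diagonal matrix with nonzero entries as an element of `GL(3,k)`. -/
noncomputable def diagGL (d : Fin 3 → k) (hd : ∀ t, d t ≠ 0) : GL (Fin 3) k :=
  ⟨Matrix.diagonal d, Matrix.diagonal (fun t => (d t)⁻¹), by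
    rw [Matrix.diagonal_mul_diagonal]
    have : (fun t => d t * (d t)⁻¹) = fun _ => (1 : k) := by
      funext t; exact mul_inv_cancel₀ (hd t)
    rw [this, Matrix.diagonal_one], by
    rw [Matrix.diagonal_mul_diagonal]
    have : (fun t => (d t)⁻¹ * d t) = fun _ => (1 : k) := by
      funext t; exact inv_mul_cancel₀ (hd t)
    rw [this, Matrix.diagonal_one]⟩

@[simp] lemma diagGL_coe (d : Fin 3 → k) (hd : ∀ t, d t ≠ 0) :
    (diagGL d hd : Matrix (Fin 3) (Fin 3) k) = Matrix.diagonal d := rfl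

set_option synthInstance.maxHeartbeats 1000000 in
set_option maxHeartbeats 1000000 in
lemma exists_eigenbasis [IsAlgClosed k] [CharZero k]
    {n : ℕ} (hn : n ≠ 0) (M : Matrix (Fin 3) (Fin 3) k) (hM : M ^ n = 1) :
    ∃ (b : Module.Basis (Fin 3) k (Fin 3 → k)) (μ : Fin 3 → k),
      (∀ t, μ t ^ n = 1) ∧ ∀ t, M.mulVec (b t) = μ t • b t := by
  classical
  set f : Module.End k (Fin 3 → k) := Matrix.toLinAlgEquiv' M with hf
  have hfn : f ^ n = 1 := by
    rw [hf, ← map_pow, hM, _root_.map_one]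
  have hsf : Squarefree (Polynomial.X ^ n - 1 : Polynomial k) := by
    have := Polynomial.separable_X_pow_sub_C (F := k) 1
      (by exact_mod_cast Nat.cast_ne_zero.mpr hn) one_ne_zero
    simpa using this.squarefree
  have hss : f.IsSemisimple := by
    apply Module.End.isSemisimple_of_squarefree_aeval_eq_zero hsf
    simp [map_sub, hfn]
  have htop : ⨆ μ : k, f.eigenspace μ = ⊤ := by
    have h1 := Module.End.iSup_maxGenEigenspace_eq_top f
    have h2 := fun μ : k => hss.isFinitelySemisimple.maxGenEigenspace_eq_eigenspace μ
    simp_rw [h2] at h1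
    exact h1
  have hint : DirectSum.IsInternal f.eigenspace :=
    DirectSum.isInternal_submodule_of_iSupIndep_of_iSup_eq_top f.eigenspaces_iSupIndep htop
  let v : ∀ μ : k, Module.Basis _ k (f.eigenspace μ) := fun μ => Module.Basis.ofVectorSpace k _
  let B := hint.collectedBasis v
  haveI : Fintype (Σ μ : k, (Module.Basis.ofVectorSpaceIndex k (f.eigenspace μ))) :=
    FiniteDimensional.fintypeBasisIndex B
  have hcard : Fintype.card (Σ μ : k, (Module.Basis.ofVectorSpaceIndex k (f.eigenspace μ))) = 3 := by
    have := Module.finrank_eq_card_basis B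
    rw [Module.finrank_pi] at this
    simpa using this.symm
  let σ : Fin 3 ≃ (Σ μ : k, (Module.Basis.ofVectorSpaceIndex k (f.eigenspace μ))) :=
    (Fintype.equivFinOfCardEq hcard).symm
  refine ⟨B.reindex σ.symm, fun t => (σ t).1, fun t => ?_, fun t => ?_⟩
  · have hmem : B (σ t) ∈ f.eigenspace (σ t).1 := hint.collectedBasis_mem v (σ t)
    have hne : B (σ t) ≠ 0 := B.ne_zero (σ t)
    have hev : Module.End.HasEigenvector f (σ t).1 (B (σ t)) := ⟨hmem, hne⟩
    have := Module.End.HasEigenvector.pow_apply hev n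
    rw [hfn] at this
    simp only [Module.End.one_apply] at this
    have h0 : ((σ t).1 ^ n - 1) • B (σ t) = 0 := by
      rw [sub_smul, one_smul, ← this, sub_self]
    rcases smul_eq_zero.mp h0 with h | h
    · exact sub_eq_zero.mp h
    · exact absurd h hne
  · have hmem : B (σ t) ∈ f.eigenspace (σ t).1 := hint.collectedBasis_mem v (σ t)
    have hv : f (B (σ t)) = (σ t).1 • B (σ t) := Module.End.mem_eigenspace_iff.mp hmem
    rw [Module.Basis.reindex_apply]
    simp only [Equiv.symm_symm]
    rw [← hv]
    rfl

lemma exists_perm3 (a : Fin 3 → ℕ) :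
    ∃ π : Equiv.Perm (Fin 3),
      (a (π 0) = a (π 1) ∧ a (π 1) = a (π 2)) ∨
      (a (π 0) = a (π 1) ∧ a (π 1) ≠ a (π 2)) ∨
      (a (π 0) < a (π 1) ∧ a (π 1) < a (π 2)) := by
  obtain ⟨π, hmono⟩ : ∃ π : Equiv.Perm (Fin 3), Monotone (a ∘ π) :=
    ⟨Tuple.sort a, Tuple.monotone_sort a⟩
  have h01 : a (π 0) ≤ a (π 1) := hmono (by decide : (0:Fin 3) ≤ 1)
  have h12 : a (π 1) ≤ a (π 2) := hmono (by decide : (1:Fin 3) ≤ 2)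
  rcases eq_or_lt_of_le h01 with he01 | hl01
  · rcases eq_or_lt_of_le h12 with he12 | hl12
    · exact ⟨π, Or.inl ⟨he01, he12⟩⟩
    · exact ⟨π, Or.inr (Or.inl ⟨he01, hl12.ne⟩)⟩
  · rcases eq_or_lt_of_le h12 with he12 | hl12
    · let cyc : Equiv.Perm (Fin 3) := (Equiv.swap 1 2).trans (Equiv.swap 0 1)
      refine ⟨cyc.trans π, Or.inr (Or.inl ?_)⟩
      have e0 : cyc 0 = 1 := by decide
      have e1 : cyc 1 = 2 := by decide
      have e2 : cyc 2 = 0 := by decide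
      simp only [Equiv.trans_apply, e0, e1, e2]
      exact ⟨he12, by omega⟩
    · exact ⟨π, Or.inr (Or.inr ⟨hl01, hl12⟩)⟩

lemma zpowers_eq_of_pow_coprime {Γ : Type*} [Group Γ] {x y : Γ} {n j : ℕ}
    (hn : 1 < n) (hx : x ^ n = 1) (hj : Nat.Coprime j n) (hy : y = x ^ j) :
    Subgroup.zpowers y = Subgroup.zpowers x := by
  apply le_antisymm
  · rw [hy]
    exact Subgroup.zpowers_le.mpr (Subgroup.mem_zpowers_iff.mpr ⟨j, by rw [zpow_natCast]⟩)
  · obtain ⟨u, -, hu⟩ := Nat.exists_mul_mod_eq_one_of_coprime hj hn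
    refine Subgroup.zpowers_le.mpr (Subgroup.mem_zpowers_iff.mpr ⟨(u : ℤ), ?_⟩)
    rw [hy, zpow_natCast, ← pow_mul]
    have : j * u = n * (j * u / n) + 1 := by
      conv_lhs => rw [← Nat.div_add_mod (j * u) n, hu]
    rw [this, pow_add, pow_mul, hx, one_pow, pow_one, one_mul]

lemma exists_zpowers_generator {Γ : Type*} [Group Γ] (G : Subgroup Γ) (hG : IsCyclic G) :
    ∃ g : Γ, Subgroup.zpowers g = G := by
  obtain ⟨g, hgen⟩ := hG.exists_generator
  refine ⟨(g : Γ), ?_⟩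
  have h1 : (Subgroup.zpowers g : Subgroup G) = ⊤ := (Subgroup.eq_top_iff' _).mpr hgen
  calc Subgroup.zpowers (g : Γ) = Subgroup.map G.subtype (Subgroup.zpowers g) :=
        (G.subtype.map_zpowers g).symm
    _ = Subgroup.map G.subtype ⊤ := by rw [h1]
    _ = G := by rw [← MonoidHom.range_eq_map, Subgroup.range_subtype]

end Aux

/-- over an algebraically closed field `k` of characteristic `0`, every cyclic
subgroup of order `n ≥ 3` of `PGL(3,k)` is conjugate either to the group generated by the
class of `diag(1,1,ε)`, or to the group generated by the class of `diag(1,ε^i,ε^j)` for some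
`1 ≤ i < j ≤ n−1` with `gcd(i,j,n) = 1`, where `ε` is a primitive `n`-th root of unity. -/
theorem cyclic_subgroup_PGL3_conjugate_to_diagonal
    {k : Type*} [Field k] [IsAlgClosed k] [CharZero k]
    (n : ℕ) (hn : 3 ≤ n) (ε : k) (hε : IsPrimitiveRoot ε n)
    (G : Subgroup (PGL 3 k)) (hGcyc : IsCyclic G) (hGcard : Nat.card G = n) :
    ∃ T : PGL 3 k,
      (∃ D : GL (Fin 3) k, (D : Matrix (Fin 3) (Fin 3) k) = Matrix.diagonal ![1, 1, ε] ∧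
        Subgroup.map (MulAut.conj T).toMonoidHom G =
          Subgroup.zpowers (QuotientGroup.mk D : PGL 3 k)) ∨
      (∃ i j : ℕ, 1 ≤ i ∧ i < j ∧ j ≤ n - 1 ∧ Nat.gcd (Nat.gcd i j) n = 1 ∧
        ∃ D : GL (Fin 3) k,
          (D : Matrix (Fin 3) (Fin 3) k) = Matrix.diagonal ![1, ε ^ i, ε ^ j] ∧
          Subgroup.map (MulAut.conj T).toMonoidHom G =
            Subgroup.zpowers (QuotientGroup.mk D : PGL 3 k)) := by
  have hn0 : n ≠ 0 := by omega
  haveI : NeZero n := ⟨hn0⟩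
  have hεne : ε ≠ 0 := by
    intro h
    have := hε.pow_eq_one
    rw [h, zero_pow hn0] at this
    exact zero_ne_one this
  have hεn : ε ^ n = 1 := hε.pow_eq_one
  have hmod : ∀ m : ℕ, ε ^ m = ε ^ (m % n) := by
    intro m
    conv_lhs => rw [← Nat.div_add_mod m n]
    rw [pow_add, pow_mul, hεn, one_pow, one_mul]
  -- Step 1: a generator
  obtain ⟨g, hgG⟩ := exists_zpowers_generator G hGcyc
  have hordg : orderOf g = n := by
    rw [← Nat.card_zpowers, hgG, hGcard]
  -- Step 2: lift to GL with n-th power 1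
  obtain ⟨A₀, hA₀⟩ : ∃ A₀ : GL (Fin 3) k, (QuotientGroup.mk A₀ : PGL 3 k) = g :=
    Quot.exists_rep g
  have hAcen : A₀ ^ n ∈ Subgroup.center (GL (Fin 3) k) := by
    rw [← QuotientGroup.eq_one_iff]
    rw [QuotientGroup.mk_pow, hA₀, ← hordg, pow_orderOf_eq_one]
  obtain ⟨c, hc0, hc⟩ := center_is_scalar hAcen
  obtain ⟨μ0, hμ0⟩ := IsAlgClosed.exists_pow_nat_eq (c⁻¹) (Nat.pos_of_ne_zero hn0)
  have hμ0ne : μ0 ≠ 0 := by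
    intro h
    rw [h, zero_pow hn0] at hμ0
    exact inv_ne_zero hc0 hμ0.symm
  set A : GL (Fin 3) k := scalarGL μ0 hμ0ne * A₀ with hA
  have hAg : (QuotientGroup.mk A : PGL 3 k) = g := by
    rw [hA, QuotientGroup.mk_mul,
      (QuotientGroup.eq_one_iff _).mpr (scalarGL_mem_center μ0 hμ0ne), one_mul, hA₀]
  have hApow : (A : Matrix (Fin 3) (Fin 3) k) ^ n = 1 := by
    have hcomm : Commute (scalarGL μ0 hμ0ne) A₀ :=
      (Subgroup.mem_center_iff.mp (scalarGL_mem_center μ0 hμ0ne) A₀).symm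
    have h1 : A ^ n = scalarGL μ0 hμ0ne ^ n * A₀ ^ n := hcomm.mul_pow n
    have h2 := congrArg Units.val h1
    rw [Units.val_pow_eq_pow_val] at h2
    rw [h2, Units.val_mul, Units.val_pow_eq_pow_val, hc]
    show ((μ0 • (1 : Matrix (Fin 3) (Fin 3) k)) ^ n) * (c • 1) = 1
    rw [smul_pow, one_pow, smul_mul_smul_comm, mul_one, hμ0, inv_mul_cancel₀ hc0, one_smul]
  -- Step 3: eigenbasis
  obtain ⟨b0, μ, hμn, heig⟩ := exists_eigenbasis hn0 (A : Matrix (Fin 3) (Fin 3) k) hApow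
  have hexp : ∀ t, ∃ a, a < n ∧ ε ^ a = μ t := by
    intro t
    obtain ⟨a, ha, hae⟩ := hε.eq_pow_of_pow_eq_one (hμn t)
    exact ⟨a, ha, hae⟩
  choose a ha hεa using hexp
  obtain ⟨π, hpat⟩ := exists_perm3 a
  set w : Fin 3 → ℕ := fun t => a (π t) with hw
  have hwlt : ∀ t, w t < n := fun t => ha (π t)
  set cb : Module.Basis (Fin 3) k (Fin 3 → k) := b0.reindex π.symm with hcb
  have hceig : ∀ t, (A : Matrix (Fin 3) (Fin 3) k).mulVec (cb t) = ε ^ (w t) • cb t := by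
    intro t
    rw [hcb, Module.Basis.reindex_apply, Equiv.symm_symm, hεa (π t)]
    exact heig (π t)
  -- Step 4: change of basis
  classical
  set e : Module.Basis (Fin 3) k (Fin 3 → k) := Pi.basisFun k (Fin 3) with he
  set P : Matrix (Fin 3) (Fin 3) k := e.toMatrix cb with hP
  haveI hPinv : Invertible P := e.invertibleToMatrix cb
  have hAP : (A : Matrix (Fin 3) (Fin 3) k) * P = P * Matrix.diagonal (fun t => ε ^ (w t)) := by
    ext r s
    rw [Matrix.mul_apply, Matrix.mul_diagonal]
    have hPe : ∀ l s, P l s = cb s l := by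
      intro l s
      rw [hP, Module.Basis.toMatrix_apply, he, Pi.basisFun_repr]
    have h1 : ∑ l, (A : Matrix (Fin 3) (Fin 3) k) r l * P l s
        = ((A : Matrix (Fin 3) (Fin 3) k).mulVec (cb s)) r := by
      rw [Matrix.mulVec, dotProduct]
      congr 1
    rw [h1, hceig s, Pi.smul_apply, smul_eq_mul, hPe r s, mul_comm]
  set Pu : GL (Fin 3) k := ⟨P, ⅟P, mul_invOf_self P, invOf_mul_self P⟩ with hPu
  have hεwne : ∀ t, ε ^ (w t) ≠ 0 := fun t => pow_ne_zero _ hεne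
  set Du : GL (Fin 3) k := diagGL (fun t => ε ^ (w t)) hεwne with hDu
  have hPAP : Pu⁻¹ * A * Pu = Du := by
    ext : 1
    show (⅟P) * (A : Matrix (Fin 3) (Fin 3) k) * P = Matrix.diagonal (fun t => ε ^ (w t))
    rw [mul_assoc, hAP, ← mul_assoc, invOf_mul_self, one_mul]
  set T : PGL 3 k := QuotientGroup.mk (Pu⁻¹) with hT
  have hTgT : (MulAut.conj T) g = (QuotientGroup.mk Du : PGL 3 k) := by
    rw [MulAut.conj_apply, ← hAg, hT, ← QuotientGroup.mk_inv, ← QuotientGroup.mk_mul,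
      ← QuotientGroup.mk_mul, inv_inv, hPAP]
  have hmapG : Subgroup.map (MulAut.conj T).toMonoidHom G
      = Subgroup.zpowers (QuotientGroup.mk Du : PGL 3 k) := by
    rw [← hgG, MonoidHom.map_zpowers, ← hTgT]
    rfl
  have hordDu : orderOf (QuotientGroup.mk Du : PGL 3 k) = n := by
    rw [← hTgT]
    rw [show ((MulAut.conj T) g : PGL 3 k) = (MulAut.conj T).toMonoidHom g from rfl]
    rw [orderOf_injective _ (MulEquiv.injective (MulAut.conj T)) g]
    exact hordg
  -- Step 5: normalize by a scalar
  set i : ℕ := (w 1 + (n - w 0)) % n with hi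
  set j : ℕ := (w 2 + (n - w 0)) % n with hj
  have hdne : ∀ t, (![1, ε ^ i, ε ^ j] : Fin 3 → k) t ≠ 0 := by
    intro t
    fin_cases t
    · exact one_ne_zero
    · exact pow_ne_zero _ hεne
    · exact pow_ne_zero _ hεne
  set Dv : GL (Fin 3) k := diagGL ![1, ε ^ i, ε ^ j] hdne with hDv
  have key : (QuotientGroup.mk Dv : PGL 3 k) = QuotientGroup.mk Du := by
    have hsD : Dv = scalarGL (ε ^ (n - w 0)) (pow_ne_zero _ hεne) * Du := by
      ext : 1
      show Matrix.diagonal ![1, ε ^ i, ε ^ j]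
        = (ε ^ (n - w 0) • 1) * Matrix.diagonal (fun t => ε ^ (w t))
      rw [Matrix.smul_mul, one_mul, ← Matrix.diagonal_smul]
      have hfun : (![1, ε ^ i, ε ^ j] : Fin 3 → k) = ε ^ (n - w 0) • fun t => ε ^ (w t) := by
        funext t
        fin_cases t
        · show (1 : k) = ε ^ (n - w 0) • ε ^ (w 0)
          rw [smul_eq_mul, ← pow_add]
          have hsum : n - w 0 + w 0 = n := by have := hwlt 0; omega
          rw [hsum, hεn]
        · show ε ^ i = ε ^ (n - w 0) • ε ^ (w 1)
          rw [smul_eq_mul, ← pow_add, add_comm (n - w 0) (w 1), hmod (w 1 + (n - w 0)), hi]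
        · show ε ^ j = ε ^ (n - w 0) • ε ^ (w 2)
          rw [smul_eq_mul, ← pow_add, add_comm (n - w 0) (w 2), hmod (w 2 + (n - w 0)), hj]
      rw [hfun]
    rw [hsD, QuotientGroup.mk_mul,
      (QuotientGroup.eq_one_iff _).mpr (scalarGL_mem_center _ _), one_mul]
  set x : PGL 3 k := (QuotientGroup.mk Dv : PGL 3 k) with hx
  have hordx : orderOf x = n := by rw [key]; exact hordDu
  have hmap2 : Subgroup.map (MulAut.conj T).toMonoidHom G = Subgroup.zpowers x := by
    rw [hmapG, ← key]
  -- powers of x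
  have hxpow : ∀ m : ℕ, ε ^ (i * m) = 1 → ε ^ (j * m) = 1 → x ^ m = 1 := by
    intro m h1 h2
    have hDvm : Dv ^ m = 1 := by
      ext : 1
      rw [Units.val_pow_eq_pow_val]
      show (Matrix.diagonal ![1, ε ^ i, ε ^ j]) ^ m = 1
      rw [Matrix.diagonal_pow]
      have : (![1, ε ^ i, ε ^ j] : Fin 3 → k) ^ m = fun _ => 1 := by
        funext t
        fin_cases t
        · simp
        · show (ε ^ i) ^ m = 1
          rw [← pow_mul]; exact h1
        · show (ε ^ j) ^ m = 1
          rw [← pow_mul]; exact h2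
      rw [this]
      exact Matrix.diagonal_one
    rw [hx, ← QuotientGroup.mk_pow, hDvm]
    rfl
  -- the gcd is 1
  have hgcd : Nat.gcd (Nat.gcd i j) n = 1 := by
    set g' := Nat.gcd (Nat.gcd i j) n with hg'
    have hg'n : g' ∣ n := Nat.gcd_dvd_right _ _
    have hg'i : g' ∣ i := (Nat.gcd_dvd_left _ _).trans (Nat.gcd_dvd_left i j)
    have hg'j : g' ∣ j := (Nat.gcd_dvd_left _ _).trans (Nat.gcd_dvd_right i j)
    have hpow : x ^ (n / g') = 1 := by
      apply hxpow
      · obtain ⟨q, hq⟩ := hg'i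
        rw [hq, mul_comm g' q, mul_assoc, Nat.mul_div_cancel' hg'n, mul_comm q n, pow_mul,
          hεn, one_pow]
      · obtain ⟨q, hq⟩ := hg'j
        rw [hq, mul_comm g' q, mul_assoc, Nat.mul_div_cancel' hg'n, mul_comm q n, pow_mul,
          hεn, one_pow]
    have hdvd : n ∣ n / g' := by
      have h := orderOf_dvd_of_pow_eq_one hpow
      rwa [hordx] at h
    have hdvd2 : n / g' ∣ n := Nat.div_dvd_of_dvd hg'n
    have heq : n / g' = n := Nat.dvd_antisymm hdvd2 hdvd
    have := Nat.div_mul_cancel hg'n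
    rw [heq] at this
    nlinarith [Nat.pos_of_ne_zero hn0]
  rcases hpat with ⟨h01, h12⟩ | ⟨h01, h12⟩ | ⟨h01, h12⟩
  -- case all equal : contradiction
  · exfalso
    have h01' : w 0 = w 1 := h01
    have h12' : w 1 = w 2 := h12
    have hieq : i = 0 := by
      rw [hi]
      have h' : w 1 + (n - w 0) = n := by have := hwlt 0; omega
      rw [h', Nat.mod_self]
    have hjeq : j = 0 := by
      rw [hj]
      have h' : w 2 + (n - w 0) = n := by have := hwlt 0; omega
      rw [h', Nat.mod_self]
    have h1 : x ^ 1 = 1 := hxpow 1 (by rw [hieq]; simp) (by rw [hjeq]; simp)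
    have hdvd := orderOf_dvd_of_pow_eq_one h1
    rw [hordx] at hdvd
    have := Nat.le_of_dvd one_pos hdvd
    omega
  -- case pair : first disjunct
  · have h01' : w 0 = w 1 := h01
    have hieq : i = 0 := by
      rw [hi]
      have h' : w 1 + (n - w 0) = n := by have := hwlt 0; omega
      rw [h', Nat.mod_self]
    have hjcop : Nat.Coprime j n := by
      rw [hieq] at hgcd
      rwa [Nat.gcd_zero_left] at hgcd
    have hd₀ : ∀ t, (![1, 1, ε] : Fin 3 → k) t ≠ 0 := by
      intro t
      fin_cases t
      · exact one_ne_zero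
      · exact one_ne_zero
      · exact hεne
    set D₀ : GL (Fin 3) k := diagGL ![1, 1, ε] hd₀ with hD₀
    have hD₀j : D₀ ^ j = Dv := by
      ext : 1
      rw [Units.val_pow_eq_pow_val]
      show (Matrix.diagonal ![1, 1, ε]) ^ j = Matrix.diagonal ![1, ε ^ i, ε ^ j]
      rw [Matrix.diagonal_pow]
      have hfun : (![1, 1, ε] : Fin 3 → k) ^ j = ![1, ε ^ i, ε ^ j] := by
        funext t
        fin_cases t <;> simp [Pi.pow_apply, hieq]
      rw [hfun]
    have hD₀n : (QuotientGroup.mk D₀ : PGL 3 k) ^ n = 1 := by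
      rw [← QuotientGroup.mk_pow]
      have : D₀ ^ n = 1 := by
        ext : 1
        rw [Units.val_pow_eq_pow_val]
        show (Matrix.diagonal ![1, 1, ε]) ^ n = 1
        rw [Matrix.diagonal_pow]
        have : (![1, 1, ε] : Fin 3 → k) ^ n = fun _ => 1 := by
          funext t
          fin_cases t
          · simp
          · simp
          · exact hεn
        rw [this]
        exact Matrix.diagonal_one
      rw [this]
      rfl
    have hzp : Subgroup.zpowers x = Subgroup.zpowers (QuotientGroup.mk D₀ : PGL 3 k) := by
      apply zpowers_eq_of_pow_coprime (by omega : 1 < n) hD₀n hjcop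
      rw [hx, ← hD₀j, QuotientGroup.mk_pow]
    refine ⟨T, Or.inl ⟨D₀, rfl, ?_⟩⟩
    rw [hmap2, hzp]
  -- case strict : second disjunct
  · have h01' : w 0 < w 1 := h01
    have h12' : w 1 < w 2 := h12
    have hieq : i = w 1 - w 0 := by
      rw [hi]
      have h1 : w 1 + (n - w 0) = n + (w 1 - w 0) := by
        have := hwlt 0
        omega
      rw [h1, Nat.add_mod_left, Nat.mod_eq_of_lt (by have := hwlt 1; omega)]
    have hjeq : j = w 2 - w 0 := by
      rw [hj]
      have h1 : w 2 + (n - w 0) = n + (w 2 - w 0) := by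
        have := hwlt 0
        omega
      rw [h1, Nat.add_mod_left, Nat.mod_eq_of_lt (by have := hwlt 2; omega)]
    refine ⟨T, Or.inr ⟨i, j, ?_, ?_, ?_, hgcd, Dv, rfl, ?_⟩⟩
    · omega
    · have := hwlt 2; omega
    · have := hwlt 2; omega
    · rw [hmap2]
end

section
/- Let f be a homogeneous polynomial in k[x,y,z] of degree n ≥ 2 over an algebraically closed field k of characteristic 0, and suppose f is invariant (up to scalar) under the projectivity (diag(1,1,η)) where η ∈ k* has multiplicative order μ > n. Then the plane curve V(f) is singular. -/
open Matrix MvPolynomial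

/-- Substitution action: `(msub B f)(x) = f(B·x)`.  For `A ∈ GL(3,k)`, `f_A := msub A⁻¹ f`. -/
noncomputable def msub {k : Type*} [CommRing k] {n : ℕ}
    (B : Matrix (Fin n) (Fin n) k) (f : MvPolynomial (Fin n) k) : MvPolynomial (Fin n) k :=
  aeval (fun i => ∑ j, MvPolynomial.C (B i j) * MvPolynomial.X j) f

lemma aeval_scale_monomial {k : Type*} [CommRing k] {N : ℕ} (d : Fin N → k)
    (m : Fin N →₀ ℕ) (a : k) :
    aeval (fun i => MvPolynomial.C (d i) * MvPolynomial.X i) (monomial m a)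
      = monomial m ((∏ i ∈ m.support, d i ^ m i) * a) := by
  rw [aeval_monomial, monomial_eq]
  simp only [mul_pow, algebraMap_eq]
  rw [Finsupp.prod, Finsupp.prod, Finset.prod_mul_distrib]
  simp only [← C_pow]
  rw [← map_prod C (fun i => d i ^ m i), C_mul, ← mul_assoc, ← C_mul, mul_comm a, C_mul]

lemma coeff_aeval_scale {k : Type*} [CommRing k] {N : ℕ} (d : Fin N → k)
    (f : MvPolynomial (Fin N) k) (m : Fin N →₀ ℕ) :
    coeff m (aeval (fun i => MvPolynomial.C (d i) * MvPolynomial.X i) f)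
      = (∏ i ∈ m.support, d i ^ m i) * coeff m f := by
  induction f using MvPolynomial.induction_on' with
  | monomial m' a =>
      rw [aeval_scale_monomial, coeff_monomial, coeff_monomial]
      rcases eq_or_ne m' m with h | h
      · simp [h, mul_comm]
      · simp [h]
  | add p q hp hq => simp only [map_add, coeff_add, hp, hq]; ring

lemma coeff_msub_diagonal {k : Type*} [CommRing k] {N : ℕ} (d : Fin N → k)
    (f : MvPolynomial (Fin N) k) (m : Fin N →₀ ℕ) :
    coeff m (msub (Matrix.diagonal d) f) = (∏ i ∈ m.support, d i ^ m i) * coeff m f := by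
  have key : (fun i => ∑ j, MvPolynomial.C (Matrix.diagonal d i j) * (MvPolynomial.X j : MvPolynomial (Fin N) k))
      = fun i => MvPolynomial.C (d i) * MvPolynomial.X i := by
    funext i
    rw [Finset.sum_eq_single i]
    · simp
    · intro j _ hj; simp [Matrix.diagonal_apply_ne' _ hj]
    · simp
  rw [msub, key, coeff_aeval_scale]

lemma coeff_pderiv' {k : Type*} [CommRing k] {N : ℕ} (i : Fin N)
    (f : MvPolynomial (Fin N) k) (m : Fin N →₀ ℕ) :
    coeff m (pderiv i f) = (m i + 1 : ℕ) * coeff (m + Finsupp.single i 1) f := by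
  induction f using MvPolynomial.induction_on' with
  | monomial s a =>
      rw [pderiv_monomial, coeff_monomial, coeff_monomial]
      rcases eq_or_ne s (m + Finsupp.single i 1) with h | h
      · subst h
        have h1 : m + Finsupp.single i 1 - Finsupp.single i 1 = m := by
          ext j; simp only [Finsupp.tsub_apply, Finsupp.add_apply, Finsupp.single_apply]; omega
        have h2 : ((m + Finsupp.single i 1 : Fin N →₀ ℕ)) i = m i + 1 := by simp
        rw [if_pos h1, if_pos rfl, h2]
        push_cast; ring
      · rw [if_neg h]
        rcases Nat.eq_zero_or_pos (s i) with h0 | h0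
        · simp [h0]
        · have hne : s - Finsupp.single i 1 ≠ m := by
            intro hc
            apply h
            ext j
            have hj : ((s - Finsupp.single i 1 : Fin N →₀ ℕ)) j = m j := by rw [hc]
            simp only [Finsupp.tsub_apply] at hj
            simp only [Finsupp.add_apply, Finsupp.single_apply]
            rcases eq_or_ne i j with rfl | hij
            · simp [Finsupp.single_apply] at hj ⊢; omega
            · simp [Finsupp.single_apply, hij] at hj ⊢; omega
          rw [if_neg hne, mul_zero]
  | add p q hp hq => simp only [map_add, coeff_add, hp, hq]; ring

lemma eval_zero_of_support {k : Type*} [CommRing k] (p : MvPolynomial (Fin 3) k) (x : Fin 3 → k)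
    (h : ∀ m ∈ p.support, ∃ i, m i ≠ 0 ∧ x i = 0) : eval x p = 0 := by
  rw [eval_eq']
  apply Finset.sum_eq_zero
  intro m hm
  obtain ⟨i, hmi, hxi⟩ := h m hm
  have hz : x i ^ m i = 0 := by rw [hxi]; exact zero_pow hmi
  rw [Finset.prod_eq_zero (Finset.mem_univ i) hz, mul_zero]

lemma exists_zero_xy {k : Type*} [Field k] [IsAlgClosed k] (d : ℕ) (hd : 1 ≤ d)
    (g : MvPolynomial (Fin 3) k)
    (hg : ∀ m ∈ g.support, m 2 = 0 ∧ m 0 + m 1 + m 2 = d) :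
    ∃ x : Fin 3 → k, x ≠ 0 ∧ x 2 = 0 ∧ eval x g = 0 := by
  set v : Fin 3 → Polynomial k := ![Polynomial.X, 1, 0] with hv
  set q : Polynomial k := aeval v g with hq
  have hmono : ∀ m ∈ g.support, m 0 = d ↔ m = Finsupp.single 0 d := by
    intro m hm
    obtain ⟨h2, hsum⟩ := hg m hm
    constructor
    · intro h0
      ext j
      fin_cases j <;> simp [Finsupp.single_apply] <;> omega
    · intro h; subst h; simp
  have hevalq : ∀ t : k, eval ![t, 1, 0] g = q.eval t := by
    intro t
    have hcomp := MvPolynomial.comp_aeval (R := k) (f := v) (Polynomial.aeval t)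
    have happ := DFunLike.congr_fun hcomp g
    simp only [AlgHom.comp_apply] at happ
    have hw : (fun i => Polynomial.aeval t (v i)) = ![t, 1, 0] := by
      funext i; fin_cases i <;> simp [hv]
    rw [hw] at happ
    have h1 : Polynomial.aeval t q = q.eval t := by
      rw [Polynomial.aeval_def, Polynomial.eval, Polynomial.eval₂_eq_eval_map,
        Polynomial.eval₂_eq_eval_map]
      simp
    have h2 : MvPolynomial.aeval ![t, 1, 0] g = eval ![t, 1, 0] g := by
      rw [MvPolynomial.aeval_def]
      rfl
    rw [← h2, ← happ]; exact h1
  have hqd : q.coeff d = coeff (Finsupp.single 0 d) g := by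
    rw [hq]
    conv_lhs => rw [g.as_sum]
    rw [map_sum, Polynomial.finset_sum_coeff]
    rw [Finset.sum_congr rfl (g := fun m => if m = Finsupp.single 0 d then coeff m g else 0)]
    · rw [Finset.sum_ite_eq' g.support (Finsupp.single 0 d) (fun m => coeff m g)]
      split
      · rfl
      · exact (MvPolynomial.notMem_support_iff.mp (by assumption)).symm
    · intro m hm
      obtain ⟨h2, hsum⟩ := hg m hm
      rw [aeval_monomial]
      have hprod : (m.prod fun i e => v i ^ e) = Polynomial.X ^ (m 0) := by
        rw [Finsupp.prod_fintype _ _ (fun i => pow_zero (v i))]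
        rw [Fin.prod_univ_three]
        simp [hv, h2]
      rw [hprod]
      rw [Polynomial.algebraMap_eq, Polynomial.coeff_C_mul, Polynomial.coeff_X_pow]
      by_cases h0 : m 0 = d
      · rw [if_pos h0.symm, if_pos ((hmono m hm).mp h0), mul_one]
      · rw [if_neg (fun h => h0 h.symm), if_neg (fun h => h0 (((hmono m hm).mpr h) )), mul_zero]
  have heval100 : eval ![1, 0, 0] g = coeff (Finsupp.single 0 d) g := by
    rw [eval_eq']
    rw [Finset.sum_congr rfl (g := fun m => if m = Finsupp.single 0 d then coeff m g else 0)]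
    · rw [Finset.sum_ite_eq' g.support (Finsupp.single 0 d) (fun m => coeff m g)]
      split
      · rfl
      · exact (MvPolynomial.notMem_support_iff.mp (by assumption)).symm
    · intro m hm
      obtain ⟨h2, hsum⟩ := hg m hm
      rw [Fin.prod_univ_three]
      simp only [Matrix.cons_val_zero, Matrix.cons_val_one, Matrix.head_cons,
        Matrix.cons_val_two, Matrix.tail_cons, one_pow, h2, pow_zero, mul_one]
      by_cases h1 : m 1 = 0
      · have hms : m = Finsupp.single 0 d := by
          ext j; fin_cases j <;> simp [Finsupp.single_apply] <;> omega
        rw [if_pos hms, h1, pow_zero, mul_one]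
        exact mul_one _
      · have hms : m ≠ Finsupp.single 0 d := by
          intro h; subst h; simp [Finsupp.single_apply] at h1
        rw [if_neg hms, zero_pow h1, mul_zero]
        exact mul_zero _
  by_cases hdeg : q.degree = 0
  · refine ⟨![1, 0, 0], ?_, rfl, ?_⟩
    · intro h
      have := congrFun h 0
      simp at this
    · rw [heval100, ← hqd]
      apply Polynomial.coeff_eq_zero_of_degree_lt
      rw [hdeg]
      exact_mod_cast hd
  · obtain ⟨t, ht⟩ := IsAlgClosed.exists_root q hdeg
    refine ⟨![t, 1, 0], ?_, rfl, ?_⟩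
    · intro h
      have := congrFun h 1
      simp at this
    · rw [hevalq t]
      exact ht

/-- let `f ∈ k[x,y,z]` be homogeneous of degree `n ≥ 2` over an algebraically
closed field `k` of characteristic `0`, invariant up to scalar under the projectivity
`(diag(1,1,η))` where `η ∈ k*` has multiplicative order `μ > n`.  Then `V(f)` is singular:
the three partial derivatives of `f` have a common zero `x ≠ 0`. -/
theorem singular_of_invariant_under_large_order_diagonal
    {k : Type*} [Field k] [IsAlgClosed k] [CharZero k]
    (n μ : ℕ) (hn : 2 ≤ n) (η : kˣ) (hη : orderOf η = μ) (hμ : n < μ)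
    (f : MvPolynomial (Fin 3) k) (hhom : f.IsHomogeneous n)
    (D : GL (Fin 3) k)
    (hD : (D : Matrix (Fin 3) (Fin 3) k) = Matrix.diagonal ![1, 1, (η : k)])
    (hinv : ∃ lam : k, lam ≠ 0 ∧
      msub ((D⁻¹ : GL (Fin 3) k) : Matrix (Fin 3) (Fin 3) k) f = lam • f) :
    ∃ x : Fin 3 → k, x ≠ 0 ∧ ∀ i : Fin 3, eval x (pderiv i f) = 0 := by
  obtain ⟨lam, hlam, heq⟩ := hinv
  -- the inverse matrix
  have hDinv : ((D⁻¹ : GL (Fin 3) k) : Matrix (Fin 3) (Fin 3) k)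
      = Matrix.diagonal ![1, 1, ((η⁻¹ : kˣ) : k)] := by
    have h1 : Matrix.diagonal ![1, 1, ((η⁻¹ : kˣ) : k)] * (D : Matrix (Fin 3) (Fin 3) k) = 1 := by
      rw [hD, Matrix.diagonal_mul_diagonal]
      have hfun : (fun i => ![1, 1, ((η⁻¹ : kˣ) : k)] i * ![1, 1, (η : k)] i) = fun _ => (1:k) := by
        funext i; fin_cases i <;> simp
      rw [hfun, Matrix.diagonal_one]
    calc ((D⁻¹ : GL (Fin 3) k) : Matrix (Fin 3) (Fin 3) k)
        = 1 * ((D⁻¹ : GL (Fin 3) k) : Matrix (Fin 3) (Fin 3) k) := (one_mul _).symm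
      _ = Matrix.diagonal ![1, 1, ((η⁻¹ : kˣ) : k)] *
          ((D : Matrix (Fin 3) (Fin 3) k) * ((D⁻¹ : GL (Fin 3) k) : Matrix (Fin 3) (Fin 3) k)) := by
          rw [← h1, mul_assoc]
      _ = Matrix.diagonal ![1, 1, ((η⁻¹ : kˣ) : k)] := by
          rw [← Units.val_mul, mul_inv_cancel, Units.val_one, mul_one]
  -- the scalar equation on coefficients
  have hprod : ∀ m : Fin 3 →₀ ℕ,
      (∏ i ∈ m.support, (![1, 1, ((η⁻¹ : kˣ) : k)] : Fin 3 → k) i ^ m i)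
        = ((η⁻¹ : kˣ) : k) ^ m 2 := by
    intro m
    rw [Finset.prod_subset (Finset.subset_univ m.support)
      (fun i _ hi => by rw [Finsupp.notMem_support_iff.mp hi, pow_zero])]
    rw [Fin.prod_univ_three]
    simp
  have key : ∀ m ∈ f.support, ((η⁻¹ : kˣ) : k) ^ m 2 = lam := by
    intro m hm
    have h1 := coeff_msub_diagonal ![1, 1, ((η⁻¹ : kˣ) : k)] f m
    rw [← hDinv, heq, coeff_smul, smul_eq_mul, hprod] at h1
    have hc : coeff m f ≠ 0 := MvPolynomial.mem_support_iff.mp hm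
    exact (mul_right_cancel₀ hc h1).symm
  -- degree facts
  have hm2 : ∀ m ∈ f.support, m 0 + m 1 + m 2 = n := by
    intro m hm
    have hw := hhom (MvPolynomial.mem_support_iff.mp hm)
    have hsum : ∑ i ∈ m.support, m i = n := by
      simpa [Finsupp.weight_apply, Finsupp.sum] using hw
    calc m 0 + m 1 + m 2 = ∑ i : Fin 3, m i := (Fin.sum_univ_three _).symm
      _ = ∑ i ∈ m.support, m i := (Finset.sum_subset (Finset.subset_univ m.support)
          (fun i _ hi => Finsupp.notMem_support_iff.mp hi)).symm
      _ = n := hsum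
  by_cases hf0 : f = 0
  · refine ⟨![1, 0, 0], ?_, ?_⟩
    · intro h; have := congrFun h 0; simp at this
    · intro i; simp [hf0]
  -- f ≠ 0 : all monomials have the same z-degree c
  obtain ⟨m0, hm0⟩ := (MvPolynomial.support_nonempty).mpr hf0
  obtain ⟨c, hc⟩ : ∃ c, m0 2 = c := ⟨_, rfl⟩
  have hsame : ∀ m ∈ f.support, m 2 = c := by
    intro m hm
    have h1 : ((η⁻¹ : kˣ) : k) ^ m 2 = ((η⁻¹ : kˣ) : k) ^ c := by
      rw [← hc]; exact (key m hm).trans (key m0 hm0).symm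
    have hu : (η⁻¹ : kˣ) ^ m 2 = (η⁻¹ : kˣ) ^ c := by
      apply Units.ext
      rw [Units.val_pow_eq_pow_val, Units.val_pow_eq_pow_val]
      exact h1
    have hord : orderOf (η⁻¹ : kˣ) = μ := by rw [orderOf_inv, hη]
    have hmlt : m 2 < μ := lt_of_le_of_lt (by have := hm2 m hm; omega) hμ
    have hclt : c < μ := lt_of_le_of_lt (show c ≤ n by have := hm2 m0 hm0; omega) hμ
    exact pow_injOn_Iio_orderOf (by rw [hord]; exact Set.mem_Iio.mpr hmlt)
      (by rw [hord]; exact Set.mem_Iio.mpr hclt) hu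
  -- support of partial derivatives
  have hpsupp : ∀ (i : Fin 3) (m' : Fin 3 →₀ ℕ), m' ∈ (pderiv i f).support →
      (m' + Finsupp.single i 1) ∈ f.support := by
    intro i m' hm'
    rw [MvPolynomial.mem_support_iff] at hm' ⊢
    intro hzero
    exact hm' (by rw [coeff_pderiv', hzero, mul_zero])
  have hsingle : ∀ (i j : Fin 3) (m' : Fin 3 →₀ ℕ),
      ((m' + Finsupp.single i 1 : Fin 3 →₀ ℕ)) j = m' j + if i = j then 1 else 0 := by
    intro i j m'; simp [Finsupp.add_apply, Finsupp.single_apply]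
  rcases Nat.lt_or_ge c 2 with hclt2 | hcge2
  · rcases Nat.lt_or_ge c 1 with hc0 | hc1
    · -- c = 0 : point (0,0,1)
      have hc0' : c = 0 := by omega
      refine ⟨![0, 0, 1], ?_, ?_⟩
      · intro h; have := congrFun h 2; simp at this
      · intro i
        apply eval_zero_of_support
        intro m' hm'
        have hM2 := hsame _ (hpsupp i m' hm')
        have hMs := hm2 _ (hpsupp i m' hm')
        simp only [hsingle] at hM2 hMs
        fin_cases i
        · simp [Fin.ext_iff] at hM2 hMs
          rcases Nat.eq_zero_or_pos (m' 0) with h | h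
          · exact ⟨1, by omega, rfl⟩
          · exact ⟨0, by omega, rfl⟩
        · simp [Fin.ext_iff] at hM2 hMs
          rcases Nat.eq_zero_or_pos (m' 0) with h | h
          · exact ⟨1, by omega, rfl⟩
          · exact ⟨0, by omega, rfl⟩
        · simp [Fin.ext_iff] at hM2
          omega
    · -- c = 1 : find a zero of the z-derivative on the line z = 0
      have hc1' : c = 1 := by omega
      have hgz : ∀ m' ∈ (pderiv 2 f).support, m' 2 = 0 ∧ m' 0 + m' 1 + m' 2 = n - 1 := by
        intro m' hm'
        have hM2 := hsame _ (hpsupp 2 m' hm')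
        have hMs := hm2 _ (hpsupp 2 m' hm')
        simp only [hsingle] at hM2 hMs
        simp [Fin.ext_iff] at hM2 hMs
        constructor
        · omega
        · omega
      obtain ⟨x, hx0, hx2, hxg⟩ := exists_zero_xy (n - 1) (by omega) (pderiv 2 f) hgz
      refine ⟨x, hx0, ?_⟩
      intro i
      fin_cases i
      · apply eval_zero_of_support
        intro m' hm'
        have hM2 := hsame _ (hpsupp 0 m' hm')
        simp only [hsingle] at hM2
        simp [Fin.ext_iff] at hM2
        exact ⟨2, by omega, hx2⟩
      · apply eval_zero_of_support
        intro m' hm'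
        have hM2 := hsame _ (hpsupp 1 m' hm')
        simp only [hsingle] at hM2
        simp [Fin.ext_iff] at hM2
        exact ⟨2, by omega, hx2⟩
      · exact hxg
  · -- c ≥ 2 : point (1,0,0)
    refine ⟨![1, 0, 0], ?_, ?_⟩
    · intro h; have := congrFun h 0; simp at this
    · intro i
      apply eval_zero_of_support
      intro m' hm'
      have hM2 := hsame _ (hpsupp i m' hm')
      simp only [hsingle] at hM2
      refine ⟨2, ?_, rfl⟩
      fin_cases i
      · simp [Fin.ext_iff] at hM2; omega
      · simp [Fin.ext_iff] at hM2; omega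
      · simp [Fin.ext_iff] at hM2; omega
end
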